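/- Fix a permutation π of V and an integer m ≥ 1. Let S be a subgroup of V such that for every J ∈ S and every I ∈ V with Hamming weight |I| > m, a^J_I = 0. Then the total set of nodes used by S is bounded by a function of m alone: the cardinality of ⋃_{J ∈ S} {i ∈ Fin n : ∃ g ∈ V, a^J_g ≠ 0 ∧ g i = 1} is at most (m·2^{2m−2})³. -/

import Mathlib

open Finset

/-- Hamming weight of an n-bit vector. -/
def wt {n : ℕ} (v : Fin n → ZMod 2) : ℕ :=
  (Finset.univ.filter (fun i => v i = 1)).card

/-- The sign (-1)^{u·v} ∈ ℝ. -/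
noncomputable def sgn {n : ℕ} (u v : Fin n → ZMod 2) : ℝ :=
  if (∑ i, u i * v i) = (1 : ZMod 2) then -1 else 1

/-- Fourier coefficient a^J_I, for a permutation π of V = Fin n → ZMod 2. -/
noncomputable def fc {n : ℕ} (π : Equiv.Perm (Fin n → ZMod 2))
    (J I : Fin n → ZMod 2) : ℝ :=
  (1 / 2 ^ n) * ∑ x : Fin n → ZMod 2, sgn I x * sgn (π x) J

-- ZMod 2 helpers
lemma z2cases (a : ZMod 2) : a = 0 ∨ a = 1 := by revert a; decide
lemma z2add (a : ZMod 2) : a + a = 0 := by revert a; decide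
lemma z2ne (a : ZMod 2) (h : a ≠ 0) : a = 1 := by revert a; decide

lemma if_mul (a b : ZMod 2) :
    (if a + b = (1:ZMod 2) then (-1:ℝ) else 1)
      = (if a = 1 then (-1:ℝ) else 1) * (if b = 1 then (-1:ℝ) else 1) := by
  have h2 : (1 + 1 : ZMod 2) = 0 := by decide
  have h01 : (0 : ZMod 2) ≠ 1 := by decide
  rcases z2cases a with ha | ha <;> rcases z2cases b with hb | hb <;>
    subst ha <;> subst hb <;> simp [h2, h01]

namespace FourierAux

variable {n : ℕ}

lemma sgn_add_left (u v w : Fin n → ZMod 2) :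
    sgn (u + v) w = sgn u w * sgn v w := by
  unfold sgn
  rw [← if_mul]
  congr 1
  simp [add_mul, Finset.sum_add_distrib]

lemma sgn_add_right (u v w : Fin n → ZMod 2) :
    sgn u (v + w) = sgn u v * sgn u w := by
  unfold sgn
  rw [← if_mul]
  congr 1
  simp [mul_add, Finset.sum_add_distrib]

lemma sgn_comm (u v : Fin n → ZMod 2) : sgn u v = sgn v u := by
  unfold sgn
  congr 1
  simp [mul_comm]

lemma sgn_zero_right (u : Fin n → ZMod 2) : sgn u 0 = 1 := by
  unfold sgn
  simp

lemma sgn_zero_left (u : Fin n → ZMod 2) : sgn 0 u = 1 := by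
  rw [sgn_comm]; exact sgn_zero_right u

lemma sgn_cases (u v : Fin n → ZMod 2) : sgn u v = 1 ∨ sgn u v = -1 := by
  unfold sgn; split <;> simp

lemma sgn_mul_self (u v : Fin n → ZMod 2) : sgn u v * sgn u v = 1 := by
  rcases sgn_cases u v with h | h <;> rw [h] <;> norm_num

lemma sgn_abs (u v : Fin n → ZMod 2) : |sgn u v| = 1 := by
  rcases sgn_cases u v with h | h <;> rw [h] <;> norm_num

end FourierAux

namespace FourierAux

variable {n : ℕ}

/-- standard basis vector -/
def ee (j : Fin n) : Fin n → ZMod 2 := fun i => if i = j then 1 else 0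

lemma sgn_ee (j : Fin n) (x : Fin n → ZMod 2) (hx : x j = 1) : sgn (ee j) x = -1 := by
  unfold sgn ee
  have : (∑ i, (if i = j then (1:ZMod 2) else 0) * x i) = x j := by
    rw [Finset.sum_eq_single j] <;> simp +contextual
  rw [this, hx]
  simp

lemma ee_self (j : Fin n) : ee j j = 1 := by simp [ee]

lemma ee_ne (i j : Fin n) (h : i ≠ j) : ee j i = 0 := by simp [ee, h]

/-- Sum of a character over the subgroup of vectors supported in `T`. -/
lemma charSum (T : Finset (Fin n)) (x : Fin n → ZMod 2) :
    ∑ U ∈ Finset.univ.filter (fun U : Fin n → ZMod 2 => ∀ i, U i = 1 → i ∈ T), sgn U x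
      = if ∀ i ∈ T, x i = 0 then (2:ℝ)^T.card else 0 := by
  classical
  by_cases h : ∀ i ∈ T, x i = 0
  · rw [if_pos h]
    have hone : ∀ U ∈ Finset.univ.filter
        (fun U : Fin n → ZMod 2 => ∀ i, U i = 1 → i ∈ T), sgn U x = 1 := by
      intro U hU
      rw [Finset.mem_filter] at hU
      unfold sgn
      have : (∑ i, U i * x i) = 0 := by
        apply Finset.sum_eq_zero
        intro i _
        by_cases hiT : i ∈ T
        · rw [h i hiT, mul_zero]
        · have : U i = 0 := by
            rcases z2cases (U i) with h0 | h1
            · exact h0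
            · exact absurd (hU.2 i h1) hiT
          rw [this, zero_mul]
      rw [this]
      norm_num
    rw [Finset.sum_congr rfl hone]
    have hcard : (Finset.univ.filter
        (fun U : Fin n → ZMod 2 => ∀ i, U i = 1 → i ∈ T)).card = 2 ^ T.card := by
      have := Finset.card_bij'
        (s := Finset.univ.filter (fun U : Fin n → ZMod 2 => ∀ i, U i = 1 → i ∈ T))
        (t := (Finset.univ : Finset (↥T → ZMod 2)))
        (fun U _ => fun p => U p.1)
        (fun v _ => fun i => if h : i ∈ T then v ⟨i, h⟩ else 0)
        (by intro a ha; exact Finset.mem_univ _)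
        (by
          intro v hv
          simp only [Finset.mem_filter, Finset.mem_univ, true_and]
          intro i hi
          by_contra hiT
          rw [dif_neg hiT] at hi
          exact absurd hi.symm (by decide))
        (by
          intro U hU
          simp only [Finset.mem_filter, Finset.mem_univ, true_and] at hU
          funext i
          show (if h : i ∈ T then U i else 0) = U i
          by_cases hiT : i ∈ T
          · rw [dif_pos hiT]
          · rw [dif_neg hiT]
            rcases z2cases (U i) with h0 | h1
            · exact h0.symm
            · exact absurd (hU i h1) hiT)
        (by
          intro v hv
          funext p
          show (if h : (p:Fin n) ∈ T then v ⟨p, h⟩ else 0) = v p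
          rw [dif_pos p.2])
      rw [this]
      simp [Fintype.card_fun]
    rw [Finset.sum_const, hcard]
    simp
  · rw [if_neg h]
    push_neg at h
    obtain ⟨j, hjT, hj⟩ := h
    have hxj : x j = 1 := z2ne _ hj
    apply Finset.sum_involution (g := fun U _ => U + ee j)
    · intro U hU
      rw [sgn_add_left, sgn_ee j x hxj]
      ring
    · intro U ha hne
      intro heq
      have := congrFun heq j
      simp only [Pi.add_apply, ee_self] at this
      have : (1 : ZMod 2) = 0 := by
        have h2 := add_left_cancel (a := U j) (b := 1) (c := 0)
        apply h2
        rw [this, add_zero]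
      exact absurd this (by decide)
    · intro U hU
      rw [Finset.mem_filter] at hU ⊢
      refine ⟨Finset.mem_univ _, ?_⟩
      intro i hi
      by_cases hij : i = j
      · exact hij ▸ hjT
      · apply hU.2 i
        rw [Pi.add_apply, ee_ne i j hij, add_zero] at hi
        exact hi
    · intro U hU
      funext i
      simp only [Pi.add_apply]
      rw [add_assoc, z2add, add_zero]

end FourierAux

namespace FourierAux

variable {n : ℕ}

lemma z2sum_eq (a b : ZMod 2) (h : a + b = 0) : a = b := by revert a b; decide

lemma v2_add_eq_zero (u v : Fin n → ZMod 2) : u + v = 0 ↔ u = v := by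
  constructor
  · intro h
    funext i
    have hi := congrFun h i
    simp only [Pi.add_apply, Pi.zero_apply] at hi
    exact z2sum_eq _ _ hi
  · intro h
    subst h
    funext i
    exact z2add (u i)

lemma sum_sgn_all (x : Fin n → ZMod 2) :
    ∑ U : Fin n → ZMod 2, sgn U x = if x = 0 then (2:ℝ)^n else 0 := by
  have h := charSum (Finset.univ : Finset (Fin n)) x
  have hfilter : (Finset.univ.filter (fun U : Fin n → ZMod 2 => ∀ i, U i = 1 → i ∈ (Finset.univ : Finset (Fin n)))) = Finset.univ := by
    apply Finset.filter_true_of_mem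
    intro U _
    intro i _
    exact Finset.mem_univ i
  rw [hfilter] at h
  rw [h]
  have hiff : (∀ i ∈ (Finset.univ : Finset (Fin n)), x i = 0) ↔ x = 0 := by
    constructor
    · intro h'; funext i; exact h' i (Finset.mem_univ i)
    · intro h' i _; exact congrFun h' i
  simp only [hiff, Finset.card_univ, Fintype.card_fin]

lemma key (x y : Fin n → ZMod 2) :
    ∑ g : Fin n → ZMod 2, sgn g x * sgn g y = if y = x then (2:ℝ)^n else 0 := by
  have h1 : ∀ g : Fin n → ZMod 2, sgn g x * sgn g y = sgn g (x + y) := by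
    intro g; rw [sgn_add_right]
  rw [Finset.sum_congr rfl (fun g _ => h1 g), sum_sgn_all (x + y)]
  congr 1
  rw [eq_iff_iff]
  rw [v2_add_eq_zero]
  constructor
  · intro h; exact h.symm
  · intro h; exact h.symm

end FourierAux

namespace FourierAux

variable {n : ℕ}

lemma sum_collapse (A : (Fin n → ZMod 2) → (Fin n → ZMod 2) → ℝ) :
    ∑ x : Fin n → ZMod 2, ∑ y : Fin n → ZMod 2,
        A x y * (∑ g : Fin n → ZMod 2, sgn g x * sgn g y)
      = (2:ℝ)^n * ∑ x : Fin n → ZMod 2, A x x := by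
  have h1 : ∀ x y : Fin n → ZMod 2,
      A x y * (∑ g : Fin n → ZMod 2, sgn g x * sgn g y)
        = if y = x then A x y * (2:ℝ)^n else 0 := by
    intro x y
    rw [key]
    split <;> simp
  calc ∑ x : Fin n → ZMod 2, ∑ y : Fin n → ZMod 2,
        A x y * (∑ g : Fin n → ZMod 2, sgn g x * sgn g y)
      = ∑ x : Fin n → ZMod 2, ∑ y : Fin n → ZMod 2,
          (if y = x then A x y * (2:ℝ)^n else 0) := by
        apply Finset.sum_congr rfl; intro x _
        apply Finset.sum_congr rfl; intro y _
        exact h1 x y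
    _ = ∑ x : Fin n → ZMod 2, A x x * (2:ℝ)^n := by
        apply Finset.sum_congr rfl; intro x _
        rw [Finset.sum_ite_eq' Finset.univ x (fun y => A x y * (2:ℝ)^n)]
        simp
    _ = (2:ℝ)^n * ∑ x : Fin n → ZMod 2, A x x := by
        rw [← Finset.sum_mul, mul_comm]

lemma swap3 (F : (Fin n → ZMod 2) → (Fin n → ZMod 2) → (Fin n → ZMod 2) → ℝ) :
    ∑ g : Fin n → ZMod 2, ∑ x : Fin n → ZMod 2, ∑ y : Fin n → ZMod 2, F g x y
      = ∑ x : Fin n → ZMod 2, ∑ y : Fin n → ZMod 2, ∑ g : Fin n → ZMod 2, F g x y := by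
  rw [Finset.sum_comm]
  apply Finset.sum_congr rfl; intro x _
  rw [Finset.sum_comm]

lemma parseval (π : Equiv.Perm (Fin n → ZMod 2)) (J : Fin n → ZMod 2) :
    ∑ g : Fin n → ZMod 2, (fc π J g)^2 = 1 := by
  have step1 : ∀ g : Fin n → ZMod 2, (fc π J g)^2
      = (1/2^n : ℝ)^2 * ∑ x : Fin n → ZMod 2, ∑ y : Fin n → ZMod 2,
          (sgn (π x) J * sgn (π y) J) * (sgn g x * sgn g y) := by
    intro g
    rw [fc, pow_two, mul_mul_mul_comm, ← pow_two, Finset.sum_mul_sum]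
    congr 1
    apply Finset.sum_congr rfl; intro x _
    apply Finset.sum_congr rfl; intro y _
    ring
  rw [Finset.sum_congr rfl (fun g _ => step1 g), ← Finset.mul_sum, swap3]
  have step2 : ∑ x : Fin n → ZMod 2, ∑ y : Fin n → ZMod 2, ∑ g : Fin n → ZMod 2,
      (sgn (π x) J * sgn (π y) J) * (sgn g x * sgn g y)
      = ∑ x : Fin n → ZMod 2, ∑ y : Fin n → ZMod 2,
          (sgn (π x) J * sgn (π y) J) * ∑ g : Fin n → ZMod 2, (sgn g x * sgn g y) := by
    apply Finset.sum_congr rfl; intro x _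
    apply Finset.sum_congr rfl; intro y _
    rw [Finset.mul_sum]
  rw [step2, sum_collapse (fun x y => sgn (π x) J * sgn (π y) J)]
  have step3 : ∑ x : Fin n → ZMod 2, sgn (π x) J * sgn (π x) J
      = (2:ℝ)^n := by
    rw [Finset.sum_congr rfl (fun x _ => sgn_mul_self (π x) J)]
    rw [Finset.sum_const, Finset.card_univ]
    simp [Fintype.card_fun]
  rw [step3]
  have h2 : ((2:ℝ)^n) ≠ 0 := by positivity
  field_simp

lemma inversion (π : Equiv.Perm (Fin n → ZMod 2)) (J x : Fin n → ZMod 2) :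
    ∑ g : Fin n → ZMod 2, fc π J g * sgn g x = sgn (π x) J := by
  have step1 : ∀ g : Fin n → ZMod 2, fc π J g * sgn g x
      = (1/2^n : ℝ) * ∑ y : Fin n → ZMod 2, sgn (π y) J * (sgn g y * sgn g x) := by
    intro g
    rw [fc, mul_assoc, Finset.sum_mul]
    congr 1
    apply Finset.sum_congr rfl; intro y _
    ring
  rw [Finset.sum_congr rfl (fun g _ => step1 g), ← Finset.mul_sum, Finset.sum_comm]
  have step2 : ∑ y : Fin n → ZMod 2, ∑ g : Fin n → ZMod 2,
      sgn (π y) J * (sgn g y * sgn g x)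
      = ∑ y : Fin n → ZMod 2, (if x = y then sgn (π y) J * (2:ℝ)^n else 0) := by
    apply Finset.sum_congr rfl; intro y _
    rw [← Finset.mul_sum, key]
    split <;> simp
  rw [step2, Finset.sum_ite_eq Finset.univ x (fun y => sgn (π y) J * (2:ℝ)^n)]
  have h2 : ((2:ℝ)^n) ≠ 0 := by positivity
  simp
  field_simp

lemma convolution (π : Equiv.Perm (Fin n → ZMod 2)) (J J' g : Fin n → ZMod 2) :
    fc π (J + J') g = ∑ h : Fin n → ZMod 2, fc π J' h * fc π J (g + h) := by
  have step1 : ∀ h : Fin n → ZMod 2, fc π J' h * fc π J (g + h)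
      = (1/2^n : ℝ)^2 * ∑ y : Fin n → ZMod 2, ∑ x : Fin n → ZMod 2,
          (sgn (π y) J' * (sgn (π x) J * sgn g x)) * (sgn h y * sgn h x) := by
    intro h
    rw [fc, fc, mul_mul_mul_comm, ← pow_two, Finset.sum_mul_sum]
    congr 1
    apply Finset.sum_congr rfl; intro y _
    apply Finset.sum_congr rfl; intro x _
    rw [sgn_add_left]
    ring
  rw [Finset.sum_congr rfl (fun h _ => step1 h), ← Finset.mul_sum, swap3]
  have step2 : ∑ y : Fin n → ZMod 2, ∑ x : Fin n → ZMod 2, ∑ h : Fin n → ZMod 2,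
      (sgn (π y) J' * (sgn (π x) J * sgn g x)) * (sgn h y * sgn h x)
      = ∑ y : Fin n → ZMod 2, ∑ x : Fin n → ZMod 2,
          (sgn (π y) J' * (sgn (π x) J * sgn g x)) * ∑ h : Fin n → ZMod 2, (sgn h y * sgn h x) := by
    apply Finset.sum_congr rfl; intro y _
    apply Finset.sum_congr rfl; intro x _
    rw [Finset.mul_sum]
  rw [step2, sum_collapse (fun y x => sgn (π y) J' * (sgn (π x) J * sgn g x))]
  have step3 : ∑ y : Fin n → ZMod 2, sgn (π y) J' * (sgn (π y) J * sgn g y)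
      = ∑ x : Fin n → ZMod 2, sgn g x * sgn (π x) (J + J') := by
    apply Finset.sum_congr rfl; intro y _
    rw [sgn_add_right]
    ring
  rw [step3, fc]
  have h2 : ((2:ℝ)^n) ≠ 0 := by positivity
  field_simp

end FourierAux

namespace FourierAux

variable {n : ℕ}

lemma z2_add_one_iff (a b : ZMod 2) (h : ¬(a = 1 ∧ b = 1)) : (a + b = 1 ↔ a = 1 ∨ b = 1) := by
  revert h; revert a b; decide

lemma wt_le (g : Fin n → ZMod 2) : wt g ≤ n := by
  unfold wt
  calc (Finset.univ.filter (fun i => g i = 1)).card ≤ Finset.univ.card :=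
        Finset.card_le_card (Finset.filter_subset _ _)
    _ = n := by simp

lemma wt_add_disjoint (g U : Fin n → ZMod 2) (h : ∀ i, g i = 1 → ¬ U i = 1) :
    wt (g + U) = wt g + wt U := by
  unfold wt
  rw [← Finset.card_union_of_disjoint]
  · congr 1
    ext i
    simp only [Finset.mem_filter, Finset.mem_univ, true_and, Finset.mem_union, Pi.add_apply]
    exact z2_add_one_iff (g i) (U i) (fun ⟨h1, h2⟩ => h i h1 h2)
  · rw [Finset.disjoint_filter]
    exact fun i _ h1 => h i h1

lemma wt_pos_of_ne_zero (U : Fin n → ZMod 2) (h : U ≠ 0) : 1 ≤ wt U := by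
  rw [Nat.one_le_iff_ne_zero]
  intro hc
  apply h
  funext i
  rcases z2cases (U i) with h0 | h1
  · exact h0
  · exfalso
    have hmem : i ∈ Finset.univ.filter (fun i => U i = 1) := by
      simp only [Finset.mem_filter, Finset.mem_univ, true_and]
      exact h1
    unfold wt at hc
    rw [Finset.card_eq_zero] at hc
    rw [hc] at hmem
    exact absurd hmem (Finset.notMem_empty i)

lemma card_cube (T : Finset (Fin n)) :
    (Finset.univ.filter (fun U : Fin n → ZMod 2 => ∀ i, U i = 1 → i ∈ T)).card = 2 ^ T.card := by
  classical
  have := Finset.card_bij'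
    (s := Finset.univ.filter (fun U : Fin n → ZMod 2 => ∀ i, U i = 1 → i ∈ T))
    (t := (Finset.univ : Finset (↥T → ZMod 2)))
    (fun U _ => fun p => U p.1)
    (fun v _ => fun i => if h : i ∈ T then v ⟨i, h⟩ else 0)
    (by intro a ha; exact Finset.mem_univ _)
    (by
      intro v hv
      simp only [Finset.mem_filter, Finset.mem_univ, true_and]
      intro i hi
      by_contra hiT
      rw [dif_neg hiT] at hi
      exact absurd hi.symm (by decide))
    (by
      intro U hU
      simp only [Finset.mem_filter, Finset.mem_univ, true_and] at hU
      funext i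
      show (if h : i ∈ T then U i else 0) = U i
      by_cases hiT : i ∈ T
      · rw [dif_pos hiT]
      · rw [dif_neg hiT]
        rcases z2cases (U i) with h0 | h1
        · exact h0.symm
        · exact absurd (hU i h1) hiT)
    (by
      intro v hv
      funext p
      show (if h : (p:Fin n) ∈ T then v ⟨p, h⟩ else 0) = v p
      rw [dif_pos p.2])
  rw [this]
  simp [Fintype.card_fun]

lemma sum_pm {α : Type*} (s : Finset α) (f : α → ℝ) (hf : ∀ a ∈ s, f a = 1 ∨ f a = -1) :
    ∃ k : ℤ, ∑ a ∈ s, f a = 2 * k + s.card := by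
  classical
  induction s using Finset.induction_on with
  | empty => exact ⟨0, by simp⟩
  | @insert a s ha ih =>
    obtain ⟨k, hk⟩ := ih (fun b hb => hf b (Finset.mem_insert_of_mem hb))
    rw [Finset.sum_insert ha, hk, Finset.card_insert_of_notMem ha]
    rcases hf a (Finset.mem_insert_self a s) with h1 | h1
    · exact ⟨k, by rw [h1]; push_cast; ring⟩
    · exact ⟨k - 1, by rw [h1]; push_cast; ring⟩

/-- Master restriction identity. -/
lemma master (π : Equiv.Perm (Fin n → ZMod 2)) (J g : Fin n → ZMod 2) (T : Finset (Fin n)) :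
    ∑ U ∈ Finset.univ.filter (fun U : Fin n → ZMod 2 => ∀ i, U i = 1 → i ∉ T), fc π J (g + U)
      = (1/2^T.card : ℝ) * ∑ z ∈ Finset.univ.filter
          (fun z : Fin n → ZMod 2 => ∀ i, z i = 1 → i ∈ T), sgn g z * sgn (π z) J := by
  classical
  have hTle : T.card ≤ n := by
    calc T.card ≤ Finset.univ.card := Finset.card_le_card (Finset.subset_univ T)
      _ = n := by simp
  have hA : Finset.univ.filter (fun U : Fin n → ZMod 2 => ∀ i, U i = 1 → i ∉ T)
      = Finset.univ.filter (fun U : Fin n → ZMod 2 => ∀ i, U i = 1 → i ∈ Tᶜ) := by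
    apply Finset.filter_congr
    intro U _
    constructor
    · intro h i hi; rw [Finset.mem_compl]; exact h i hi
    · intro h i hi; rw [← Finset.mem_compl]; exact h i hi
  rw [hA]
  have step1 : ∀ U : Fin n → ZMod 2, fc π J (g + U)
      = (1/2^n : ℝ) * ∑ x : Fin n → ZMod 2, (sgn g x * sgn (π x) J) * sgn U x := by
    intro U
    rw [fc]
    congr 1
    apply Finset.sum_congr rfl; intro x _
    rw [sgn_add_left]
    ring
  rw [Finset.sum_congr rfl (fun U _ => step1 U), ← Finset.mul_sum, Finset.sum_comm]
  have step2 : ∑ x : Fin n → ZMod 2, ∑ U ∈ Finset.univ.filter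
        (fun U : Fin n → ZMod 2 => ∀ i, U i = 1 → i ∈ Tᶜ), (sgn g x * sgn (π x) J) * sgn U x
      = ∑ x : Fin n → ZMod 2, (if ∀ i ∈ Tᶜ, x i = 0
          then (sgn g x * sgn (π x) J) * (2:ℝ)^(Tᶜ.card) else 0) := by
    apply Finset.sum_congr rfl; intro x _
    rw [← Finset.mul_sum, charSum]
    split <;> simp
  rw [step2]
  rw [← Finset.sum_filter]
  have hBB : Finset.univ.filter (fun x : Fin n → ZMod 2 => ∀ i ∈ Tᶜ, x i = 0)
      = Finset.univ.filter (fun z : Fin n → ZMod 2 => ∀ i, z i = 1 → i ∈ T) := by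
    apply Finset.filter_congr
    intro x _
    constructor
    · intro h i hi
      by_contra hiT
      have := h i (Finset.mem_compl.mpr hiT)
      rw [this] at hi
      exact absurd hi (by decide)
    · intro h i hi
      rcases z2cases (x i) with h0 | h1
      · exact h0
      · exact absurd (h i h1) (Finset.mem_compl.mp hi)
  rw [hBB, ← Finset.sum_mul, Finset.card_compl]
  simp only [Fintype.card_fin]
  have hpow : (1/2^n : ℝ) * ((∑ z ∈ Finset.univ.filter
      (fun z : Fin n → ZMod 2 => ∀ i, z i = 1 → i ∈ T), sgn g z * sgn (π z) J) * (2:ℝ)^(n - T.card))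
      = (1/2^T.card : ℝ) * ∑ z ∈ Finset.univ.filter
          (fun z : Fin n → ZMod 2 => ∀ i, z i = 1 → i ∈ T), sgn g z * sgn (π z) J := by
    have h2n : (2:ℝ)^n = 2^(T.card) * 2^(n - T.card) := by
      rw [← pow_add]
      congr 1
      omega
    rw [h2n]
    have hne1 : ((2:ℝ)^(T.card)) ≠ 0 := by positivity
    have hne2 : ((2:ℝ)^(n - T.card)) ≠ 0 := by positivity
    field_simp
  rw [hpow]

end FourierAux

namespace FourierAux

variable {n : ℕ}

lemma wt_zero_no (g : Fin n → ZMod 2) (h : wt g = 0) (i : Fin n) (hi : g i = 1) : False := by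
  have hmem : i ∈ Finset.univ.filter (fun i => g i = 1) := by
    simp only [Finset.mem_filter, Finset.mem_univ, true_and]
    exact hi
  unfold wt at h
  rw [Finset.card_eq_zero] at h
  rw [h] at hmem
  exact absurd hmem (Finset.notMem_empty i)

lemma sum_int_div {α : Type*} (s : Finset α) (f : α → ℝ) (c : ℝ)
    (h : ∀ a ∈ s, ∃ k : ℤ, f a = k / c) : ∃ K : ℤ, ∑ a ∈ s, f a = K / c := by
  classical
  induction s using Finset.induction_on with
  | empty => exact ⟨0, by simp⟩
  | @insert a s ha ih =>
    obtain ⟨K, hK⟩ := ih (fun b hb => h b (Finset.mem_insert_of_mem hb))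
    obtain ⟨k, hk⟩ := h a (Finset.mem_insert_self a s)
    refine ⟨k + K, ?_⟩
    rw [Finset.sum_insert ha, hK, hk, ← add_div]
    push_cast
    ring

lemma granularity (hn : 1 ≤ n) (π : Equiv.Perm (Fin n → ZMod 2)) (m : ℕ) (hm : 1 ≤ m)
    (J : Fin n → ZMod 2) (hJ : ∀ I : Fin n → ZMod 2, m < wt I → fc π J I = 0) :
    ∀ g : Fin n → ZMod 2, ∃ k : ℤ, fc π J g = (k : ℝ) / 2^(m-1) := by
  suffices H : ∀ d : ℕ, ∀ g : Fin n → ZMod 2, n - wt g = d →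
      ∃ k : ℤ, fc π J g = (k : ℝ) / 2^(m-1) by
    intro g
    exact H (n - wt g) g rfl
  intro d
  induction d using Nat.strong_induction_on with
  | _ d ih =>
  intro g hd
  by_cases hw : m < wt g
  · exact ⟨0, by rw [hJ g hw]; simp⟩
  push_neg at hw
  set T : Finset (Fin n) :=
    if wt g = 0 then {(⟨0, hn⟩ : Fin n)} else Finset.univ.filter (fun i => g i = 1) with hT
  have hsupp : ∀ i, g i = 1 → i ∈ T := by
    intro i hi
    rw [hT]
    split
    · rename_i h0
      exact absurd (wt_zero_no g h0 i hi) (fun x => x)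
    · simp only [Finset.mem_filter, Finset.mem_univ, true_and]
      exact hi
  have hT1 : 1 ≤ T.card := by
    rw [hT]
    split
    · simp
    · rename_i h0
      have : wt g ≠ 0 := h0
      unfold wt at this
      omega
  have hTm : T.card ≤ m := by
    rw [hT]
    split
    · simpa using hm
    · exact le_trans (le_of_eq rfl) hw
  set A : Finset (Fin n → ZMod 2) :=
    Finset.univ.filter (fun U : Fin n → ZMod 2 => ∀ i, U i = 1 → i ∉ T) with hA
  set B : Finset (Fin n → ZMod 2) :=
    Finset.univ.filter (fun z : Fin n → ZMod 2 => ∀ i, z i = 1 → i ∈ T) with hB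
  have hmaster : ∑ U ∈ A, fc π J (g + U)
      = (1/2^T.card : ℝ) * ∑ z ∈ B, sgn g z * sgn (π z) J := master π J g T
  -- granularity of the full A-sum
  obtain ⟨k, hk⟩ := sum_pm B (fun z => sgn g z * sgn (π z) J) (by
    intro z _
    show sgn g z * sgn (π z) J = 1 ∨ sgn g z * sgn (π z) J = -1
    rcases sgn_cases g z with h1 | h1 <;> rcases sgn_cases (π z) J with h2 | h2 <;>
      rw [h1, h2] <;> norm_num)
  have hBcard : (B.card : ℝ) = 2^T.card := by
    rw [hB, card_cube T]
    push_cast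
    ring
  have hsumA : ∑ U ∈ A, fc π J (g + U) = ((k + 2^(T.card - 1)) * 2^(m - T.card) : ℤ) / 2^(m-1) := by
    rw [hmaster, hk, hBcard]
    have e1 : (2:ℝ)^T.card = 2 * 2^(T.card - 1) := by
      rw [← pow_succ']
      congr 1
      omega
    have e2 : (2:ℝ)^(m-1) = 2^(m - T.card) * 2^(T.card - 1) := by
      rw [← pow_add]
      congr 1
      omega
    rw [e1, e2]
    have hne1 : ((2:ℝ)^(T.card - 1)) ≠ 0 := by positivity
    have hne2 : ((2:ℝ)^(m - T.card)) ≠ 0 := by positivity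
    push_cast
    field_simp
  -- granularity of each other term
  have hterm : ∀ U ∈ A.erase 0, ∃ kU : ℤ, fc π J (g + U) = (kU : ℝ) / 2^(m-1) := by
    intro U hU
    have hU0 : U ≠ 0 := Finset.ne_of_mem_erase hU
    have hUA : U ∈ A := Finset.mem_of_mem_erase hU
    rw [hA, Finset.mem_filter] at hUA
    have hdisj : ∀ i, g i = 1 → ¬ U i = 1 := by
      intro i hgi hUi
      exact (hUA.2 i hUi) (hsupp i hgi)
    have hwt : wt (g + U) = wt g + wt U := wt_add_disjoint g U hdisj
    have h1U : 1 ≤ wt U := wt_pos_of_ne_zero U hU0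
    have hle : wt (g + U) ≤ n := wt_le _
    exact ih (n - wt (g + U)) (by omega) (g + U) rfl
  obtain ⟨K, hK⟩ := sum_int_div (A.erase 0) (fun U => fc π J (g + U)) (2^(m-1)) hterm
  -- conclude
  have h0A : (0 : Fin n → ZMod 2) ∈ A := by
    rw [hA, Finset.mem_filter]
    refine ⟨Finset.mem_univ _, ?_⟩
    intro i hi
    rw [Pi.zero_apply] at hi
    exact absurd hi (by decide)
  have hsplit : fc π J (g + 0) + ∑ U ∈ A.erase 0, fc π J (g + U) = ∑ U ∈ A, fc π J (g + U) :=
    Finset.add_sum_erase A (fun U => fc π J (g + U)) h0A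
  rw [add_zero] at hsplit
  refine ⟨(k + 2^(T.card - 1)) * 2^(m - T.card) - K, ?_⟩
  have : fc π J g = ∑ U ∈ A, fc π J (g + U) - ∑ U ∈ A.erase 0, fc π J (g + U) := by
    rw [← hsplit]
    ring
  rw [this, hsumA, hK]
  push_cast
  ring

end FourierAux

namespace FourierAux

variable {n : ℕ}

lemma sparsity (hn : 1 ≤ n) (π : Equiv.Perm (Fin n → ZMod 2)) (m : ℕ) (hm : 1 ≤ m)
    (J : Fin n → ZMod 2) (hJ : ∀ I : Fin n → ZMod 2, m < wt I → fc π J I = 0) :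
    (Finset.univ.filter (fun g : Fin n → ZMod 2 => fc π J g ≠ 0)).card ≤ 2^(2*m-2) := by
  classical
  set s := Finset.univ.filter (fun g : Fin n → ZMod 2 => fc π J g ≠ 0) with hs
  have hg := granularity hn π m hm J hJ
  have hcpos : (0:ℝ) < 2^(m-1) := by positivity
  have h1 : ∀ g ∈ s, (1/2^(m-1):ℝ)^2 ≤ (fc π J g)^2 := by
    intro g hgs
    rw [hs, Finset.mem_filter] at hgs
    obtain ⟨k, hk⟩ := hg g
    have hk0 : k ≠ 0 := by
      intro h
      rw [h] at hk
      simp at hk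
      exact hgs.2 hk
    have hk1 : (1:ℝ) ≤ (k:ℝ)^2 := by
      have : 1 ≤ |(k:ℝ)| := by exact_mod_cast Int.one_le_abs hk0
      calc (1:ℝ) = 1^2 := by norm_num
        _ ≤ |(k:ℝ)|^2 := by gcongr <;> norm_num
        _ = (k:ℝ)^2 := sq_abs _
    have e : ((k:ℝ)/2^(m-1))^2 = (k:ℝ)^2 / (2^(m-1))^2 := by ring
    have e2 : ((1:ℝ)/2^(m-1))^2 = 1 / (2^(m-1))^2 := by ring
    rw [hk, e, e2, div_le_div_iff₀ (by positivity) (by positivity)]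
    nlinarith [sq_nonneg ((2:ℝ)^(m-1)), hk1, hcpos]
  have h2 : (s.card : ℝ) * (1/2^(m-1))^2 ≤ 1 := by
    calc (s.card : ℝ) * (1/2^(m-1))^2 = ∑ _g ∈ s, (1/2^(m-1):ℝ)^2 := by
          rw [Finset.sum_const, nsmul_eq_mul]
      _ ≤ ∑ g ∈ s, (fc π J g)^2 := Finset.sum_le_sum h1
      _ ≤ ∑ g : Fin n → ZMod 2, (fc π J g)^2 :=
          Finset.sum_le_sum_of_subset_of_nonneg (Finset.subset_univ s)
            (fun g _ _ => sq_nonneg _)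
      _ = 1 := parseval π J
  have h3 : (s.card : ℝ) ≤ 2^(2*m-2) := by
    have he : ((2:ℝ)^(2*m-2)) = (2^(m-1))^2 := by
      rw [← pow_mul]
      congr 1
      omega
    rw [he]
    rw [one_div, inv_pow] at h2
    have := mul_le_mul_of_nonneg_right h2 (le_of_lt (by positivity : (0:ℝ) < (2^(m-1))^2))
    rw [mul_assoc, inv_mul_cancel₀ (by positivity), mul_one, one_mul] at this
    exact this
  exact_mod_cast h3

/-- The node set of `J`. -/
noncomputable def Nd (π : Equiv.Perm (Fin n → ZMod 2)) (J : Fin n → ZMod 2) : Finset (Fin n) :=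
  Finset.univ.filter (fun i => ∃ g : Fin n → ZMod 2, fc π J g ≠ 0 ∧ g i = 1)

lemma Nd_card (hn : 1 ≤ n) (π : Equiv.Perm (Fin n → ZMod 2)) (m : ℕ) (hm : 1 ≤ m)
    (J : Fin n → ZMod 2) (hJ : ∀ I : Fin n → ZMod 2, m < wt I → fc π J I = 0) :
    (Nd π J).card ≤ m * 2^(2*m-2) := by
  classical
  set s := Finset.univ.filter (fun g : Fin n → ZMod 2 => fc π J g ≠ 0) with hs
  have hsub : Nd π J ⊆ s.biUnion (fun g => Finset.univ.filter (fun i => g i = 1)) := by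
    intro i hi
    rw [Nd, Finset.mem_filter] at hi
    obtain ⟨_, g, hfc, hgi⟩ := hi
    rw [Finset.mem_biUnion]
    exact ⟨g, by rw [hs, Finset.mem_filter]; exact ⟨Finset.mem_univ _, hfc⟩,
      by rw [Finset.mem_filter]; exact ⟨Finset.mem_univ _, hgi⟩⟩
  calc (Nd π J).card ≤ (s.biUnion (fun g => Finset.univ.filter (fun i => g i = 1))).card :=
        Finset.card_le_card hsub
    _ ≤ ∑ g ∈ s, (Finset.univ.filter (fun i => g i = 1)).card := Finset.card_biUnion_le
    _ ≤ ∑ _g ∈ s, m := by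
        apply Finset.sum_le_sum
        intro g hgs
        rw [hs, Finset.mem_filter] at hgs
        have : ¬ (m < wt g) := fun hc => hgs.2 (hJ g hc)
        unfold wt at this
        omega
    _ = s.card * m := by rw [Finset.sum_const, smul_eq_mul]
    _ ≤ 2^(2*m-2) * m := by
        apply Nat.mul_le_mul_right
        exact sparsity hn π m hm J hJ
    _ = m * 2^(2*m-2) := mul_comm _ _

lemma Nd_zero (π : Equiv.Perm (Fin n → ZMod 2)) : Nd π (0 : Fin n → ZMod 2) = ∅ := by
  classical
  rw [Finset.eq_empty_iff_forall_notMem]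
  intro i hi
  rw [Nd, Finset.mem_filter] at hi
  obtain ⟨_, g, hfc, hgi⟩ := hi
  apply hfc
  have hg0 : g ≠ 0 := by
    intro h
    rw [h, Pi.zero_apply] at hgi
    exact absurd hgi (by decide)
  rw [fc]
  have : ∀ x : Fin n → ZMod 2, sgn g x * sgn (π x) (0 : Fin n → ZMod 2) = sgn x g := by
    intro x
    rw [sgn_zero_right, mul_one, sgn_comm]
  rw [Finset.sum_congr rfl (fun x _ => this x), sum_sgn_all g, if_neg hg0]
  simp

lemma z2_sum_one (a b : ZMod 2) (h : a + b = 1) : a = 1 ∨ b = 1 := by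
  revert h; revert a b; decide

lemma Nd_add (π : Equiv.Perm (Fin n → ZMod 2)) (J J' : Fin n → ZMod 2) :
    Nd π (J + J') ⊆ Nd π J ∪ Nd π J' := by
  classical
  intro i hi
  rw [Nd, Finset.mem_filter] at hi
  obtain ⟨_, g, hfc, hgi⟩ := hi
  rw [convolution] at hfc
  obtain ⟨h, _, hne⟩ := Finset.exists_ne_zero_of_sum_ne_zero hfc
  have hfc1 : fc π J' h ≠ 0 := fun hc => hne (by rw [hc, zero_mul])
  have hfc2 : fc π J (g + h) ≠ 0 := fun hc => hne (by rw [hc, mul_zero])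
  have hsum : (g + h) i + h i = 1 := by
    rw [Pi.add_apply, add_assoc, z2add, add_zero]
    exact hgi
  rcases z2_sum_one _ _ hsum with h1 | h1
  · apply Finset.mem_union_left
    rw [Nd, Finset.mem_filter]
    exact ⟨Finset.mem_univ _, g + h, hfc2, h1⟩
  · apply Finset.mem_union_right
    rw [Nd, Finset.mem_filter]
    exact ⟨Finset.mem_univ _, h, hfc1, h1⟩

end FourierAux

namespace FourierAux

variable {n : ℕ}

lemma orth (π : Equiv.Perm (Fin n → ZMod 2)) (J J' : Fin n → ZMod 2) :
    ∑ x : Fin n → ZMod 2, sgn (π x) J * sgn (π x) J'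
      = if J = J' then (2:ℝ)^n else 0 := by
  have h1 : ∀ x : Fin n → ZMod 2, sgn (π x) J * sgn (π x) J' = sgn (π x) (J + J') :=
    fun x => (sgn_add_right _ _ _).symm
  rw [Finset.sum_congr rfl (fun x _ => h1 x)]
  rw [Equiv.sum_comp π (fun y => sgn y (J + J'))]
  rw [sum_sgn_all (J + J')]
  congr 1
  rw [eq_iff_iff, v2_add_eq_zero]

lemma linind (π : Equiv.Perm (Fin n → ZMod 2)) :
    LinearIndependent ℝ
      (fun (J : Fin n → ZMod 2) => (fun x => sgn (π x) J : (Fin n → ZMod 2) → ℝ)) := by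
  rw [Fintype.linearIndependent_iff]
  intro c hc J₀
  have hx : ∀ x : Fin n → ZMod 2, ∑ J : Fin n → ZMod 2, c J * sgn (π x) J = 0 := by
    intro x
    have := congrFun hc x
    rw [Finset.sum_apply] at this
    simpa using this
  have key0 : ∑ x : Fin n → ZMod 2,
      (∑ J : Fin n → ZMod 2, c J * sgn (π x) J) * sgn (π x) J₀ = 0 := by
    apply Finset.sum_eq_zero
    intro x _
    rw [hx x, zero_mul]
  have key1 : ∑ x : Fin n → ZMod 2,
      (∑ J : Fin n → ZMod 2, c J * sgn (π x) J) * sgn (π x) J₀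
      = c J₀ * (2:ℝ)^n := by
    have step : ∀ x : Fin n → ZMod 2,
        (∑ J : Fin n → ZMod 2, c J * sgn (π x) J) * sgn (π x) J₀
        = ∑ J : Fin n → ZMod 2, c J * (sgn (π x) J * sgn (π x) J₀) := by
      intro x
      rw [Finset.sum_mul]
      apply Finset.sum_congr rfl
      intro J _
      ring
    rw [Finset.sum_congr rfl (fun x _ => step x), Finset.sum_comm]
    have step2 : ∀ J : Fin n → ZMod 2,
        ∑ x : Fin n → ZMod 2, c J * (sgn (π x) J * sgn (π x) J₀)
          = if J = J₀ then c J * (2:ℝ)^n else 0 := by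
      intro J
      rw [← Finset.mul_sum, orth]
      split <;> simp
    rw [Finset.sum_congr rfl (fun J _ => step2 J)]
    rw [Finset.sum_ite_eq' Finset.univ J₀ (fun J => c J * (2:ℝ)^n)]
    simp
  have := key1 ▸ key0
  have h2 : ((2:ℝ)^n) ≠ 0 := by positivity
  rcases mul_eq_zero.mp this with h | h
  · exact h
  · exact absurd h h2

lemma Nd_sum (π : Equiv.Perm (Fin n → ZMod 2)) {ι : Type*} [DecidableEq ι]
    (s : Finset ι) (v : ι → Fin n → ZMod 2) :
    Nd π (∑ i ∈ s, v i) ⊆ s.biUnion (fun i => Nd π (v i)) := by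
  classical
  induction s using Finset.induction_on with
  | empty =>
    rw [Finset.sum_empty, Nd_zero]
    exact Finset.empty_subset _
  | @insert a s ha ih =>
    rw [Finset.sum_insert ha]
    intro i hi
    rcases Finset.mem_union.mp (Nd_add π (v a) (∑ j ∈ s, v j) hi) with h | h
    · rw [Finset.biUnion_insert]
      exact Finset.mem_union_left _ h
    · rw [Finset.biUnion_insert]
      exact Finset.mem_union_right _ (ih h)

lemma count_le {α : Type*} [DecidableEq α] (T : Finset α) (m : ℕ) :
    ((T.powerset.filter (fun s => s.card ≤ m))).card ≤ (T.card + 1)^m := by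
  induction m with
  | zero =>
    have hsub : T.powerset.filter (fun s => s.card ≤ 0) ⊆ {∅} := by
      intro s hs
      rw [Finset.mem_filter] at hs
      rw [Finset.mem_singleton]
      exact Finset.card_eq_zero.mp (Nat.le_zero.mp hs.2)
    calc _ ≤ ({∅} : Finset (Finset α)).card := Finset.card_le_card hsub
      _ = 1 := Finset.card_singleton _
      _ ≤ _ := by simp
  | succ m ih =>
    have hsub : T.powerset.filter (fun s => s.card ≤ m + 1)
        ⊆ T.powerset.filter (fun s => s.card ≤ m) ∪ T.powersetCard (m+1) := by
      intro s hs
      rw [Finset.mem_filter] at hs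
      rcases Nat.lt_or_ge s.card (m+1) with h | h
      · apply Finset.mem_union_left
        rw [Finset.mem_filter]
        exact ⟨hs.1, by omega⟩
      · apply Finset.mem_union_right
        rw [Finset.mem_powersetCard]
        exact ⟨Finset.mem_powerset.mp hs.1, by omega⟩
    calc (T.powerset.filter (fun s => s.card ≤ m + 1)).card
        ≤ (T.powerset.filter (fun s => s.card ≤ m) ∪ T.powersetCard (m+1)).card :=
          Finset.card_le_card hsub
      _ ≤ (T.powerset.filter (fun s => s.card ≤ m)).card + (T.powersetCard (m+1)).card :=
          Finset.card_union_le _ _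
      _ ≤ (T.card + 1)^m + T.card.choose (m+1) := by
          rw [Finset.card_powersetCard]
          exact Nat.add_le_add_right ih _
      _ ≤ (T.card + 1)^m + T.card^(m+1) := Nat.add_le_add_left (Nat.choose_le_pow _ _) _
      _ ≤ (T.card + 1)^m + T.card * (T.card + 1)^m := by
          apply Nat.add_le_add_left
          rw [pow_succ']
          exact Nat.mul_le_mul_left _ (Nat.pow_le_pow_left (Nat.le_succ _) _)
      _ = (T.card + 1)^(m+1) := by ring
  

end FourierAux

namespace FourierAux

lemma m_le_pow (m : ℕ) : m ≤ 2^(m-1) := by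
  induction m with
  | zero => simp
  | succ m ih =>
    rcases Nat.eq_zero_or_pos m with h0 | h1
    · subst h0; simp
    · have h2 : m + 1 - 1 = (m - 1) + 1 := by omega
      rw [h2, pow_succ]
      have hp : 1 ≤ 2^(m-1) := Nat.one_le_two_pow
      omega

lemma lemA (m r : ℕ) (h : 2*m ≤ r) : (r+1)^m * r ≤ (r + 2*m) * r^m := by
  induction m with
  | zero => simp
  | succ m ih =>
    have hm' : 2*m ≤ r := by omega
    have ih' := ih hm'
    have step : (r + 2*m) * (r+1) ≤ (r + 2*(m+1)) * r := by nlinarith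
    calc (r+1)^(m+1) * r = ((r+1)^m * r) * (r+1) := by ring
      _ ≤ ((r + 2*m) * r^m) * (r+1) := Nat.mul_le_mul_right _ ih'
      _ = ((r + 2*m) * (r+1)) * r^m := by ring
      _ ≤ ((r + 2*(m+1)) * r) * r^m := Nat.mul_le_mul_right _ step
      _ = (r + 2*(m+1)) * r^(m+1) := by ring

lemma stepB (m r : ℕ) (hm : 1 ≤ m) (h : 2*m ≤ r) : (r+1)^m ≤ 2*r^m := by
  have hr : 0 < r := by omega
  apply Nat.le_of_mul_le_mul_right _ hr
  calc (r+1)^m * r ≤ (r + 2*m) * r^m := lemA m r h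
    _ ≤ (2*r) * r^m := by
        apply Nat.mul_le_mul_right
        omega
    _ = (2 * r^m) * r := by ring

lemma D_facts (m : ℕ) (hm : 1 ≤ m) : 2*m ≤ (m * 2^(2*m-2))^2 + 1 := by
  rcases Nat.lt_or_ge m 2 with h2 | h2
  · have : m = 1 := by omega
    subst this
    norm_num
  · have h4 : 4 ≤ 2^(2*m-2) := by
      calc (4:ℕ) = 2^2 := by norm_num
        _ ≤ 2^(2*m-2) := Nat.pow_le_pow_right (by norm_num) (by omega)
    have hD : 2*m ≤ m * 2^(2*m-2) := by nlinarith
    nlinarith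

lemma mainArith (m : ℕ) (hm : 1 ≤ m) :
    ∀ r : ℕ, (m * 2^(2*m-2))^2 + 1 ≤ r → (r * (m * 2^(2*m-2)) + 1)^m < 2^r := by
  set D := m * 2^(2*m-2) with hD
  have hD1 : 1 ≤ D := by
    rw [hD]
    have : 1 ≤ 2^(2*m-2) := Nat.one_le_two_pow
    nlinarith
  intro r hr
  induction r, hr using Nat.le_induction with
  | base =>
    -- ((D^2+1) * D + 1)^m < 2^(D^2+1)
    rcases Nat.lt_or_ge m 2 with h2 | h2
    · have hm1 : m = 1 := by omega
      subst hm1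
      simp only [hD] at *
      norm_num
    · -- m ≥ 2
      have hpowD : D ≤ 2^(3*m-3) := by
        rw [hD]
        calc m * 2^(2*m-2) ≤ 2^(m-1) * 2^(2*m-2) := Nat.mul_le_mul_right _ (m_le_pow m)
          _ = 2^(3*m-3) := by rw [← pow_add]; congr 1; omega
      have h4' : 4 ≤ 2^(2*m-2) := by
        calc (4:ℕ) = 2^2 := by norm_num
          _ ≤ 2^(2*m-2) := Nat.pow_le_pow_right (by norm_num) (by omega)
      have hD8 : 8 ≤ D := by rw [hD]; nlinarith
      have h1 : (D^2+1) * D + 1 ≤ 2 * D^3 := by nlinarith [hD8, sq_nonneg D]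
      have h2' : 2 * D^3 ≤ 2^(9*m-8) := by
        calc 2 * D^3 ≤ 2 * (2^(3*m-3))^3 := by
              apply Nat.mul_le_mul_left
              exact Nat.pow_le_pow_left hpowD 3
          _ = 2^(9*m-8) := by
              rw [← pow_mul, ← pow_succ']
              congr 1
              omega
      have h3 : ((D^2+1) * D + 1)^m ≤ 2^((9*m-8)*m) := by
        calc ((D^2+1) * D + 1)^m ≤ (2^(9*m-8))^m := by
              apply Nat.pow_le_pow_left
              omega
          _ = 2^((9*m-8)*m) := by rw [← pow_mul]
      have h4 : (9*m-8)*m < D^2 + 1 := by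
        have hD2 : D^2 = m^2 * 2^(4*m-4) := by
          rw [hD, mul_pow, ← pow_mul]
          congr 2
          omega
        have h16 : 16 ≤ 2^(4*m-4) := by
          calc (16:ℕ) = 2^4 := by norm_num
            _ ≤ 2^(4*m-4) := Nat.pow_le_pow_right (by norm_num) (by omega)
        have h9 : (9*m-8)*m ≤ 9*m^2 := by
          calc (9*m-8)*m ≤ (9*m)*m := Nat.mul_le_mul_right _ (by omega)
            _ = 9*m^2 := by ring
        nlinarith
      calc ((D^2+1) * D + 1)^m ≤ 2^((9*m-8)*m) := h3
        _ < 2^(D^2+1) := Nat.pow_lt_pow_right (by norm_num) h4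
  | succ r hr' ih =>
    have h2m : 2*m ≤ r := by
      have hf := D_facts m hm
      rw [← hD] at hf
      omega
    have hrpos : 0 < r := by omega
    have key : ((r+1)*D+1)^m * r^m ≤ ((r*D+1)^m * 2) * r^m := by
      calc ((r+1)*D+1)^m * r^m = (((r+1)*D+1) * r)^m := by rw [mul_pow]
        _ ≤ ((r*D+1) * (r+1))^m := by
            apply Nat.pow_le_pow_left
            nlinarith
        _ = (r*D+1)^m * (r+1)^m := by rw [mul_pow]
        _ ≤ (r*D+1)^m * (2*r^m) := Nat.mul_le_mul_left _ (stepB m r hm h2m)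
        _ = ((r*D+1)^m * 2) * r^m := by ring
    have key2 : ((r+1)*D+1)^m ≤ (r*D+1)^m * 2 := by
      apply Nat.le_of_mul_le_mul_right key
      positivity
    calc ((r+1)*D+1)^m ≤ (r*D+1)^m * 2 := key2
      _ < 2^r * 2 := by
          exact (Nat.mul_lt_mul_right (by norm_num)).mpr ih
      _ = 2^(r+1) := by rw [pow_succ]

end FourierAux

open FourierAux

open Classical in
/-- If every element of a subgroup S of V has all its Fourier coefficients localized
to weight ≤ m, then the total number of nodes used by S is at most (m·2^(2m-2))³
(bound D_m). -/
theorem subgroup_nodes_bound {n : ℕ} (hn : 1 ≤ n) (π : Equiv.Perm (Fin n → ZMod 2))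
    (m : ℕ) (hm : 1 ≤ m) (S : AddSubgroup (Fin n → ZMod 2))
    (hloc : ∀ J ∈ S, ∀ I : Fin n → ZMod 2, m < wt I → fc π J I = 0) :
    (Finset.univ.filter (fun i : Fin n =>
        ∃ J ∈ S, ∃ g : Fin n → ZMod 2, fc π J g ≠ 0 ∧ g i = 1)).card
      ≤ (m * 2 ^ (2 * m - 2)) ^ 3 := by
  classical
  set D := m * 2^(2*m-2) with hDdef
  set Tset := Finset.univ.filter (fun i : Fin n =>
      ∃ J ∈ S, ∃ g : Fin n → ZMod 2, fc π J g ≠ 0 ∧ g i = 1) with hTset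
  have memT : ∀ (i : Fin n),
      (∃ J ∈ S, ∃ g : Fin n → ZMod 2, fc π J g ≠ 0 ∧ g i = 1) → i ∈ Tset := by
    intro i hi
    rw [hTset, Finset.mem_filter]
    exact ⟨Finset.mem_univ _, hi⟩
  set S' : Submodule (ZMod 2) (Fin n → ZMod 2) := AddSubgroup.toZModSubmodule 2 S with hS'
  have memS' : ∀ x : Fin n → ZMod 2, x ∈ S' ↔ x ∈ S := by
    intro x
    rw [hS']
    exact AddSubgroup.mem_toZModSubmodule 2
  haveI : Fintype ↥S' := Fintype.ofFinite _
  haveI : Module.Finite (ZMod 2) ↥S' := Module.Finite.of_finite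
  set r := Module.finrank (ZMod 2) ↥S' with hr
  let b : Module.Basis (Fin r) (ZMod 2) ↥S' := Module.finBasis (ZMod 2) ↥S'
  have hbS : ∀ k : Fin r, ((b k : ↥S') : Fin n → ZMod 2) ∈ S := by
    intro k
    have h2 := (b k).2
    rwa [← memS' _]
  -- Part 1
  have part1 : Tset ⊆ (Finset.univ : Finset (Fin r)).biUnion
      (fun k => Nd π ((b k : ↥S') : Fin n → ZMod 2)) := by
    intro i hi
    rw [hTset, Finset.mem_filter] at hi
    obtain ⟨-, J, hJS, g, hfc, hgi⟩ := hi
    have hJS' : J ∈ S' := (memS' J).mpr hJS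
    set Jv : ↥S' := ⟨J, hJS'⟩ with hJv
    have hJrepr : J = ∑ k : Fin r,
        ((b.repr Jv k) • ((b k : ↥S') : Fin n → ZMod 2)) := by
      have h1 := b.sum_repr Jv
      have h2 := congrArg (Subtype.val) h1
      rw [show (Jv : Fin n → ZMod 2) = J from rfl] at h2
      rw [← h2]
      rw [AddSubmonoidClass.coe_finset_sum]
      apply Finset.sum_congr rfl
      intro k _
      rfl
    have hiJ : i ∈ Nd π J := by
      rw [Nd, Finset.mem_filter]
      exact ⟨Finset.mem_univ _, g, hfc, hgi⟩
    rw [hJrepr] at hiJ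
    have hmem := Nd_sum π Finset.univ
      (fun k => (b.repr Jv k) • ((b k : ↥S') : Fin n → ZMod 2)) hiJ
    rw [Finset.mem_biUnion] at hmem ⊢
    obtain ⟨k, _, hk2⟩ := hmem
    refine ⟨k, Finset.mem_univ _, ?_⟩
    have hk2' : i ∈ Nd π ((b.repr Jv k) • ((b k : ↥S') : Fin n → ZMod 2)) := hk2
    rcases z2cases (b.repr Jv k) with h0 | h1
    · rw [h0, zero_smul, Nd_zero] at hk2'
      exact absurd hk2' (Finset.notMem_empty _)
    · rwa [h1, one_smul] at hk2'
  -- Part 2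
  have part2 : Tset.card ≤ r * D := by
    calc Tset.card
        ≤ ((Finset.univ : Finset (Fin r)).biUnion
            (fun k => Nd π ((b k : ↥S') : Fin n → ZMod 2))).card :=
          Finset.card_le_card part1
      _ ≤ ∑ k : Fin r, (Nd π ((b k : ↥S') : Fin n → ZMod 2)).card :=
          Finset.card_biUnion_le
      _ ≤ ∑ _k : Fin r, D := by
          apply Finset.sum_le_sum
          intro k _
          exact Nd_card hn π m hm _ (hloc _ (hbS k))
      _ = r * D := by
          rw [Finset.sum_const, Finset.card_univ, Fintype.card_fin, smul_eq_mul]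
  -- Part 3
  set Γ := Finset.univ.filter
      (fun g : Fin n → ZMod 2 => (∀ i, g i = 1 → i ∈ Tset) ∧ wt g ≤ m) with hΓ
  have part3a : Fintype.card ↥S' = 2^r := by
    rw [Module.card_eq_pow_finrank (K := ZMod 2) (V := ↥S'), ZMod.card]
  have part3b : Fintype.card ↥S' ≤ Γ.card := by
    set χ : (Fin n → ZMod 2) → ((Fin n → ZMod 2) → ℝ) := fun g => (fun x => sgn g x) with hχ
    set W : Submodule ℝ ((Fin n → ZMod 2) → ℝ) :=
      Submodule.span ℝ ((Γ.image χ : Finset ((Fin n → ZMod 2) → ℝ)) : Set ((Fin n → ZMod 2) → ℝ)) with hW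
    have hspan : ∀ J : ↥S', (fun x => sgn (π x) (J : Fin n → ZMod 2)) ∈ W := by
      intro J
      have hJS : (J : Fin n → ZMod 2) ∈ S := (memS' _).mp J.2
      have hfun : (fun x => sgn (π x) (J : Fin n → ZMod 2))
          = ∑ g ∈ Γ, fc π (J : Fin n → ZMod 2) g • χ g := by
        funext x
        rw [Finset.sum_apply]
        have hterm : ∀ g ∈ Γ, (fc π (J : Fin n → ZMod 2) g • χ g) x
            = fc π (J : Fin n → ZMod 2) g * sgn g x := by
          intro g _
          rfl
        rw [Finset.sum_congr rfl hterm]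
        have hvan : ∀ g ∈ (Finset.univ : Finset (Fin n → ZMod 2)), g ∉ Γ →
            fc π (J : Fin n → ZMod 2) g * sgn g x = 0 := by
          intro g _ hgΓ
          have hz : fc π (J : Fin n → ZMod 2) g = 0 := by
            by_contra hne
            apply hgΓ
            rw [hΓ, Finset.mem_filter]
            refine ⟨Finset.mem_univ _, ?_, ?_⟩
            · intro i hgi
              exact memT i ⟨(J : Fin n → ZMod 2), hJS, g, hne, hgi⟩
            · by_contra hwt
              push_neg at hwt
              exact hne (hloc _ hJS g hwt)
          rw [hz, zero_mul]
        rw [Finset.sum_subset (Finset.subset_univ Γ) hvan]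
        exact (inversion π (J : Fin n → ZMod 2) x).symm
      rw [hfun]
      apply Submodule.sum_mem
      intro g hg
      apply Submodule.smul_mem
      apply Submodule.subset_span
      rw [Finset.coe_image]
      exact Set.mem_image_of_mem _ hg
    haveI : FiniteDimensional ℝ ↥W := FiniteDimensional.span_of_finite ℝ (Finset.finite_toSet _)
    set u' : ↥S' → ↥W := fun J => ⟨fun x => sgn (π x) (J : Fin n → ZMod 2), hspan J⟩ with hu'def
    have hu' : LinearIndependent ℝ u' := by
      apply LinearIndependent.of_comp (W.subtype)
      have heq : (W.subtype ∘ u')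
          = (fun (J : ↥S') => (fun x => sgn (π x) (J : Fin n → ZMod 2))) := rfl
      rw [heq]
      exact (linind π).comp Subtype.val Subtype.val_injective
    have hcard := hu'.fintype_card_le_finrank
    have hfr : Module.finrank ℝ ↥W ≤ (Γ.image χ).card := by
      have h := finrank_span_finset_le_card (R := ℝ) (Γ.image χ)
      rw [Set.finrank] at h
      exact h
    calc Fintype.card ↥S' ≤ Module.finrank ℝ ↥W := hcard
      _ ≤ (Γ.image χ).card := hfr
      _ ≤ Γ.card := Finset.card_image_le
  have part3c : Γ.card ≤ (Tset.card + 1)^m := by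
    have hmaps : ∀ g ∈ Γ, (Finset.univ.filter (fun i => g i = 1))
        ∈ Tset.powerset.filter (fun s => s.card ≤ m) := by
      intro g hg
      rw [hΓ, Finset.mem_filter] at hg
      rw [Finset.mem_filter, Finset.mem_powerset]
      refine ⟨?_, ?_⟩
      · intro i hi
        rw [Finset.mem_filter] at hi
        exact hg.2.1 i hi.2
      · exact hg.2.2
    have hinj : Set.InjOn (fun g : Fin n → ZMod 2 => Finset.univ.filter (fun i => g i = 1)) ↑Γ := by
      intro g hg g' hg' heq0
      have heq : Finset.univ.filter (fun i => g i = 1) = Finset.univ.filter (fun i => g' i = 1) := heq0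
      funext i
      have hiff : g i = 1 ↔ g' i = 1 := by
        constructor
        · intro h
          have : i ∈ Finset.univ.filter (fun i => g i = 1) := by
            rw [Finset.mem_filter]; exact ⟨Finset.mem_univ _, h⟩
          rw [heq, Finset.mem_filter] at this
          exact this.2
        · intro h
          have : i ∈ Finset.univ.filter (fun i => g' i = 1) := by
            rw [Finset.mem_filter]; exact ⟨Finset.mem_univ _, h⟩
          rw [← heq, Finset.mem_filter] at this
          exact this.2
      rcases z2cases (g i) with h0 | h1
      · rcases z2cases (g' i) with g0 | g1
        · rw [h0, g0]
        · exact absurd (hiff.mpr g1) (by rw [h0]; decide)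
      · rw [h1, hiff.mp h1]
    calc Γ.card ≤ (Tset.powerset.filter (fun s => s.card ≤ m)).card :=
          Finset.card_le_card_of_injOn _ hmaps hinj
      _ ≤ (Tset.card + 1)^m := count_le Tset m
  -- conclusion
  have hrD : r ≤ D^2 := by
    by_contra hcon
    push_neg at hcon
    have harith := mainArith m hm r (by rw [← hDdef]; omega)
    rw [← hDdef] at harith
    have hchain : (2:ℕ)^r ≤ (Tset.card + 1)^m := by
      calc (2:ℕ)^r = Fintype.card ↥S' := part3a.symm
        _ ≤ Γ.card := part3b
        _ ≤ (Tset.card + 1)^m := part3c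
    have hmono : (Tset.card + 1)^m ≤ (r * D + 1)^m :=
      Nat.pow_le_pow_left (by omega) m
    omega
  calc Tset.card ≤ r * D := part2
    _ ≤ D^2 * D := Nat.mul_le_mul_right _ hrD
    _ = D^3 := by ring
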